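/- The function QW ↦ F₁^t(QW, Q̃W̃) = D(W‖P|Q) + D^t(QW, Q̃W̃), as a function of the joint distribution QW on X×Y, is convex on the set S = { QW : Σ_x Q(x)f(x) ≤ α, F₁^t(QW, Q̃W̃) < +∞ }, and S is a convex set. -/

import Mathlib

open scoped BigOperators
open Filter Topology

/-- A joint probability distribution on `X × Y`, given by a nonnegative
pmf `p` summing to one. -/
structure JointDist (X Y : Type) [Fintype X] [Fintype Y] where
  p : X → Y → ℝ
  nonneg : ∀ x y, 0 ≤ p x y
  sum_one : ∑ x : X, ∑ y : Y, p x y = 1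

namespace JointDist

variable {X Y : Type} [Fintype X] [Fintype Y]

/-- `X`-marginal `Q`. -/
noncomputable def Qm (μ : JointDist X Y) (x : X) : ℝ := ∑ y : Y, μ.p x y

/-- `Y`-marginal `T`. -/
noncomputable def Tm (μ : JointDist X Y) (y : Y) : ℝ := ∑ x : X, μ.p x y

/-- Conditional distribution `W(y|x)`. -/
noncomputable def Wc (μ : JointDist X Y) (x : X) (y : Y) : ℝ :=
  if μ.Qm x = 0 then 0 else μ.p x y / μ.Qm x

/-- Conditional distribution `V(x|y)`. -/
noncomputable def Vc (μ : JointDist X Y) (y : Y) (x : X) : ℝ :=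
  if μ.Tm y = 0 then 0 else μ.p x y / μ.Tm y

end JointDist

/-- Kullback–Leibler divergence `D(p‖q)` between finite nonnegative vectors,
valued in `EReal`, with the conventions `0 log 0 = 0` and `D = ⊤` if
absolute continuity fails. -/
noncomputable def relEnt {Z : Type} [Fintype Z] (p q : Z → ℝ) : EReal :=
  if ∀ z, q z = 0 → p z = 0 then
    (((∑ z : Z, if p z = 0 then 0 else p z * Real.log (p z / q z)) : ℝ) : EReal)
  else ⊤

/-- Conditional KL divergence `D(w‖w'|q) = ∑_a q(a) D(w(·|a)‖w'(·|a))`,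
valued in `EReal` with the usual conventions. -/
noncomputable def condRelEnt {A B : Type} [Fintype A] [Fintype B]
    (q : A → ℝ) (w w' : A → B → ℝ) : EReal :=
  if ∀ a b, q a ≠ 0 → w' a b = 0 → w a b = 0 then
    (((∑ a : A, ∑ b : B, if q a * w a b = 0 then 0
        else q a * w a b * Real.log (w a b / w' a b)) : ℝ) : EReal)
  else ⊤

variable {X Y : Type}

/-- The weighted divergence combination
`D^t(QW, Q'W') = t₁ D(Q‖Q') + t₂ D(W‖W'|Q) + t₃ D(T‖T') + t₄ D(V‖V'|T)`. -/
noncomputable def Dt [Fintype X] [Fintype Y] (t : Fin 4 → ℝ)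
    (μ ν : JointDist X Y) : EReal :=
  (t 0 : EReal) * relEnt μ.Qm ν.Qm + (t 1 : EReal) * condRelEnt μ.Qm μ.Wc ν.Wc +
  (t 2 : EReal) * relEnt μ.Tm ν.Tm + (t 3 : EReal) * condRelEnt μ.Tm μ.Vc ν.Vc

/-- `D(W‖P|Q)` for the channel `P`. -/
noncomputable def condDivP [Fintype X] [Fintype Y] (P : X → Y → ℝ)
    (μ : JointDist X Y) : EReal :=
  condRelEnt μ.Qm μ.Wc P

/-- Mutual information `I(Q,W)` of the joint law `QW`. -/
noncomputable def mutInfo [Fintype X] [Fintype Y] (μ : JointDist X Y) : ℝ :=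
  ∑ x : X, ∑ y : Y, if μ.p x y = 0 then 0
    else μ.p x y * Real.log (μ.p x y / (μ.Qm x * μ.Tm y))

/-- Expected cost `E_Q[f(X)]`. -/
noncomputable def expCost [Fintype X] [Fintype Y] (f : X → ℝ)
    (μ : JointDist X Y) : ℝ :=
  ∑ x : X, μ.Qm x * f x

/-- `F₁^t(QW, Q̃W̃) = D(W‖P|Q) + D^t(QW, Q̃W̃)`. -/
noncomputable def F1 [Fintype X] [Fintype Y] (P : X → Y → ℝ) (t : Fin 4 → ℝ)
    (μ ν : JointDist X Y) : EReal :=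
  condDivP P μ + Dt t μ ν

/-- `F₂(QW, R) = D(W‖P|Q) − I(Q,W) + R`. -/
noncomputable def F2 [Fintype X] [Fintype Y] (P : X → Y → ℝ) (R : ℝ)
    (μ : JointDist X Y) : EReal :=
  condDivP P μ - ((mutInfo μ : ℝ) : EReal) + ((R : ℝ) : EReal)

/-- `F^t(QW, Q̃W̃, R) = max{F₁^t(QW, Q̃W̃), F₂(QW, R)}`. -/
noncomputable def Fr [Fintype X] [Fintype Y] (P : X → Y → ℝ) (t : Fin 4 → ℝ)
    (R : ℝ) (μ ν : JointDist X Y) : EReal :=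
  max (F1 P t μ ν) (F2 P R μ)

/-- `E_c^t(Q̃W̃, R, α)`: the constrained minimum of `F^t(·, Q̃W̃, R)`. -/
noncomputable def Ec [Fintype X] [Fintype Y] (P : X → Y → ℝ) (t : Fin 4 → ℝ)
    (f : X → ℝ) (R α : ℝ) (ν : JointDist X Y) : EReal :=
  sInf ((fun μ => Fr P t R μ ν) '' {μ : JointDist X Y | expCost f μ ≤ α})

/-- `F^t(ρ, η, QW, Q̃W̃) = D(W‖P|Q) − ρ I(Q,W) + η E_Q[f] + (1−ρ) D^t(QW, Q̃W̃)`. -/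
noncomputable def Fslope [Fintype X] [Fintype Y] (P : X → Y → ℝ) (t : Fin 4 → ℝ)
    (f : X → ℝ) (ρ η : ℝ) (μ ν : JointDist X Y) : EReal :=
  condDivP P μ - ((ρ * mutInfo μ : ℝ) : EReal) + ((η * expCost f μ : ℝ) : EReal)
    + ((1 - ρ : ℝ) : EReal) * Dt t μ ν

/-- `E₀^t(ρ, η, Q̃W̃)`: the unconstrained minimum of `F^t(ρ, η, ·, Q̃W̃)`. -/
noncomputable def E0 [Fintype X] [Fintype Y] (P : X → Y → ℝ) (t : Fin 4 → ℝ)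
    (f : X → ℝ) (ρ η : ℝ) (ν : JointDist X Y) : EReal :=
  sInf (Set.range (fun μ : JointDist X Y => Fslope P t f ρ η μ ν))

section Aux

open Real

lemma logsum (l a₁ a₂ b₁ b₂ : ℝ) (hl0 : 0 ≤ l) (hl1 : l ≤ 1)
    (ha₁ : 0 ≤ a₁) (ha₂ : 0 ≤ a₂) (hb₁ : 0 ≤ b₁) (hb₂ : 0 ≤ b₂)
    (h1 : b₁ = 0 → a₁ = 0) (h2 : b₂ = 0 → a₂ = 0) :
    (l * a₁ + (1 - l) * a₂) * Real.log ((l * a₁ + (1 - l) * a₂) / (l * b₁ + (1 - l) * b₂))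
      ≤ l * (a₁ * Real.log (a₁ / b₁)) + (1 - l) * (a₂ * Real.log (a₂ / b₂)) := by
  have hl' : 0 ≤ 1 - l := by linarith
  rcases eq_or_lt_of_le hb₁ with hb₁e | hb₁p
  · have ha₁e : a₁ = 0 := h1 hb₁e.symm
    subst ha₁e
    rw [← hb₁e]
    simp only [mul_zero, zero_add, Real.log_zero, mul_zero, zero_mul]
    rcases eq_or_lt_of_le hl' with hle | hlp
    · rw [← hle]; simp
    · rcases eq_or_lt_of_le hb₂ with hb₂e | hb₂p
      · have : a₂ = 0 := h2 hb₂e.symm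
        simp [this]
      · rw [mul_div_mul_left _ _ (ne_of_gt hlp)]
        ring_nf; exact le_refl _
  rcases eq_or_lt_of_le hb₂ with hb₂e | hb₂p
  · have ha₂e : a₂ = 0 := h2 hb₂e.symm
    subst ha₂e
    rw [← hb₂e]
    simp only [mul_zero, add_zero, Real.log_zero, mul_zero, zero_mul]
    rcases eq_or_lt_of_le hl0 with hle | hlp
    · rw [← hle]; simp
    · rw [mul_div_mul_left _ _ (ne_of_gt hlp)]
      ring_nf; exact le_refl _
  · set s := l * b₁ + (1 - l) * b₂ with hs
    have hsp : 0 < s := by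
      rcases eq_or_lt_of_le hl0 with h | h
      · have hse : s = b₂ := by rw [hs, ← h]; ring
        rw [hse]; exact hb₂p
      · have h1' := mul_pos h hb₁p
        have h2' := mul_nonneg hl' hb₂p.le
        rw [hs]; linarith
    have key := Real.convexOn_mul_log.2 (Set.mem_Ici.mpr (div_nonneg ha₁ hb₁)
      : a₁/b₁ ∈ Set.Ici (0:ℝ)) (Set.mem_Ici.mpr (div_nonneg ha₂ hb₂))
      (show (0:ℝ) ≤ l * b₁ / s from by positivity)
      (show (0:ℝ) ≤ (1 - l) * b₂ / s from by positivity)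
      (show l * b₁ / s + (1 - l) * b₂ / s = 1 from by field_simp; exact hs.symm)
    simp only [smul_eq_mul] at key
    have hcomb : l * b₁ / s * (a₁ / b₁) + (1 - l) * b₂ / s * (a₂ / b₂)
        = (l * a₁ + (1 - l) * a₂) / s := by
      field_simp
    rw [hcomb] at key
    have key2 := mul_le_mul_of_nonneg_left key hsp.le
    calc (l * a₁ + (1 - l) * a₂) * Real.log ((l * a₁ + (1 - l) * a₂) / s)
        = s * ((l * a₁ + (1 - l) * a₂) / s * Real.log ((l * a₁ + (1 - l) * a₂) / s)) := by
          field_simp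
      _ ≤ s * (l * b₁ / s * (a₁ / b₁ * Real.log (a₁ / b₁))
            + (1 - l) * b₂ / s * (a₂ / b₂ * Real.log (a₂ / b₂))) := key2
      _ = l * (a₁ * Real.log (a₁ / b₁)) + (1 - l) * (a₂ * Real.log (a₂ / b₂)) := by
          field_simp

lemma sum_logsum1 {Z : Type} [Fintype Z] (l : ℝ) (hl0 : 0 ≤ l) (hl1 : l ≤ 1)
    (p₁ p₂ c₁ c₂ pk ck : Z → ℝ)
    (hp₁ : ∀ z, 0 ≤ p₁ z) (hp₂ : ∀ z, 0 ≤ p₂ z)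
    (hc₁ : ∀ z, 0 ≤ c₁ z) (hc₂ : ∀ z, 0 ≤ c₂ z)
    (h1 : ∀ z, c₁ z = 0 → p₁ z = 0) (h2 : ∀ z, c₂ z = 0 → p₂ z = 0)
    (hpk : ∀ z, pk z = l * p₁ z + (1 - l) * p₂ z)
    (hck : ∀ z, ck z = l * c₁ z + (1 - l) * c₂ z) :
    ∑ z : Z, pk z * Real.log (pk z / ck z)
      ≤ l * ∑ z : Z, p₁ z * Real.log (p₁ z / c₁ z)
        + (1 - l) * ∑ z : Z, p₂ z * Real.log (p₂ z / c₂ z) := by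
  rw [Finset.mul_sum, Finset.mul_sum, ← Finset.sum_add_distrib]
  refine Finset.sum_le_sum fun z _ => ?_
  rw [hpk z, hck z]
  exact logsum l (p₁ z) (p₂ z) (c₁ z) (c₂ z) hl0 hl1 (hp₁ z) (hp₂ z) (hc₁ z) (hc₂ z)
    (h1 z) (h2 z)

lemma sum_logsum2 {A B : Type} [Fintype A] [Fintype B] (l : ℝ) (hl0 : 0 ≤ l) (hl1 : l ≤ 1)
    (p₁ p₂ c₁ c₂ pk ck : A → B → ℝ)
    (hp₁ : ∀ a b, 0 ≤ p₁ a b) (hp₂ : ∀ a b, 0 ≤ p₂ a b)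
    (hc₁ : ∀ a b, 0 ≤ c₁ a b) (hc₂ : ∀ a b, 0 ≤ c₂ a b)
    (h1 : ∀ a b, c₁ a b = 0 → p₁ a b = 0) (h2 : ∀ a b, c₂ a b = 0 → p₂ a b = 0)
    (hpk : ∀ a b, pk a b = l * p₁ a b + (1 - l) * p₂ a b)
    (hck : ∀ a b, ck a b = l * c₁ a b + (1 - l) * c₂ a b) :
    ∑ a : A, ∑ b : B, pk a b * Real.log (pk a b / ck a b)
      ≤ l * ∑ a : A, ∑ b : B, p₁ a b * Real.log (p₁ a b / c₁ a b)
        + (1 - l) * ∑ a : A, ∑ b : B, p₂ a b * Real.log (p₂ a b / c₂ a b) := by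
  rw [Finset.mul_sum, Finset.mul_sum, ← Finset.sum_add_distrib]
  refine Finset.sum_le_sum fun a _ => ?_
  exact sum_logsum1 l hl0 hl1 (p₁ a) (p₂ a) (c₁ a) (c₂ a) (pk a) (ck a)
    (hp₁ a) (hp₂ a) (hc₁ a) (hc₂ a) (h1 a) (h2 a) (hpk a) (hck a)

end Aux

section Aux2

variable {X Y : Type} [Fintype X] [Fintype Y]

namespace JointDist

lemma Qm_nonneg (μ : JointDist X Y) (x : X) : 0 ≤ μ.Qm x :=
  Finset.sum_nonneg fun y _ => μ.nonneg x y

lemma Tm_nonneg (μ : JointDist X Y) (y : Y) : 0 ≤ μ.Tm y :=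
  Finset.sum_nonneg fun x _ => μ.nonneg x y

lemma p_eq_zero_of_Qm {μ : JointDist X Y} {x : X} (h : μ.Qm x = 0) (y : Y) :
    μ.p x y = 0 :=
  (Finset.sum_eq_zero_iff_of_nonneg (fun y _ => μ.nonneg x y)).1 h y (Finset.mem_univ y)

lemma p_eq_zero_of_Tm {μ : JointDist X Y} {y : Y} (h : μ.Tm y = 0) (x : X) :
    μ.p x y = 0 :=
  (Finset.sum_eq_zero_iff_of_nonneg (fun x _ => μ.nonneg x y)).1 h x (Finset.mem_univ x)

lemma Wc_nonneg (μ : JointDist X Y) (x : X) (y : Y) : 0 ≤ μ.Wc x y := by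
  rw [Wc]; split
  · exact le_refl 0
  · exact div_nonneg (μ.nonneg x y) (μ.Qm_nonneg x)

lemma Vc_nonneg (μ : JointDist X Y) (y : Y) (x : X) : 0 ≤ μ.Vc y x := by
  rw [Vc]; split
  · exact le_refl 0
  · exact div_nonneg (μ.nonneg x y) (μ.Tm_nonneg y)

end JointDist

/-- c-form absolute continuity from the `Wc` form. -/
lemma wc_cform (μ : JointDist X Y) (w' : X → Y → ℝ)
    (h : ∀ x y, μ.Qm x ≠ 0 → w' x y = 0 → μ.Wc x y = 0) :
    ∀ x y, μ.Qm x * w' x y = 0 → μ.p x y = 0 := by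
  intro x y hxy
  rcases mul_eq_zero.mp hxy with h0 | h0
  · exact JointDist.p_eq_zero_of_Qm h0 y
  · by_cases hq : μ.Qm x = 0
    · exact JointDist.p_eq_zero_of_Qm hq y
    · have hw := h x y hq h0
      rw [JointDist.Wc, if_neg hq, div_eq_zero_iff] at hw
      exact hw.resolve_right hq

lemma vc_cform (μ : JointDist X Y) (v' : Y → X → ℝ)
    (h : ∀ y x, μ.Tm y ≠ 0 → v' y x = 0 → μ.Vc y x = 0) :
    ∀ y x, μ.Tm y * v' y x = 0 → μ.p x y = 0 := by
  intro y x hxy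
  rcases mul_eq_zero.mp hxy with h0 | h0
  · exact JointDist.p_eq_zero_of_Tm h0 x
  · by_cases hq : μ.Tm y = 0
    · exact JointDist.p_eq_zero_of_Tm hq x
    · have hw := h y x hq h0
      rw [JointDist.Vc, if_neg hq, div_eq_zero_iff] at hw
      exact hw.resolve_right hq

/-- Evaluation of `relEnt` under absolute continuity. -/
lemma relEnt_eq {Z : Type} [Fintype Z] (p q : Z → ℝ)
    (h : ∀ z, q z = 0 → p z = 0) :
    relEnt p q = (((∑ z : Z, p z * Real.log (p z / q z)) : ℝ) : EReal) := by
  rw [relEnt, if_pos h]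
  congr 1
  refine Finset.sum_congr rfl fun z _ => ?_
  split
  · rename_i hz; rw [hz, zero_mul]
  · rfl

/-- Evaluation of `condRelEnt μ.Qm μ.Wc w'` under absolute continuity (c-form). -/
lemma condRelEnt_Wc_eq (μ : JointDist X Y) (w' : X → Y → ℝ)
    (h : ∀ x y, μ.Qm x * w' x y = 0 → μ.p x y = 0) :
    condRelEnt μ.Qm μ.Wc w'
      = (((∑ x : X, ∑ y : Y, μ.p x y * Real.log (μ.p x y / (μ.Qm x * w' x y))) : ℝ)
          : EReal) := by
  have hac : ∀ x y, μ.Qm x ≠ 0 → w' x y = 0 → μ.Wc x y = 0 := by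
    intro x y hq hw
    rw [JointDist.Wc, if_neg hq, h x y (by rw [hw, mul_zero]), zero_div]
  rw [condRelEnt, if_pos hac]
  congr 1
  refine Finset.sum_congr rfl fun x _ => Finset.sum_congr rfl fun y _ => ?_
  by_cases hq : μ.Qm x = 0
  · rw [JointDist.p_eq_zero_of_Qm hq y, JointDist.Wc, if_pos hq]
    simp
  · have hW : μ.Wc x y = μ.p x y / μ.Qm x := by rw [JointDist.Wc, if_neg hq]
    have hQW : μ.Qm x * μ.Wc x y = μ.p x y := by
      rw [hW, mul_div_cancel₀ _ hq]
    rw [hQW]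
    by_cases hp : μ.p x y = 0
    · rw [if_pos hp, hp, zero_mul]
    · rw [if_neg hp, hW, div_div]

/-- Evaluation of `condRelEnt μ.Tm μ.Vc v'` under absolute continuity (c-form). -/
lemma condRelEnt_Vc_eq (μ : JointDist X Y) (v' : Y → X → ℝ)
    (h : ∀ y x, μ.Tm y * v' y x = 0 → μ.p x y = 0) :
    condRelEnt μ.Tm μ.Vc v'
      = (((∑ y : Y, ∑ x : X, μ.p x y * Real.log (μ.p x y / (μ.Tm y * v' y x))) : ℝ)
          : EReal) := by
  have hac : ∀ y x, μ.Tm y ≠ 0 → v' y x = 0 → μ.Vc y x = 0 := by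
    intro y x hq hw
    rw [JointDist.Vc, if_neg hq, h y x (by rw [hw, mul_zero]), zero_div]
  rw [condRelEnt, if_pos hac]
  congr 1
  refine Finset.sum_congr rfl fun y _ => Finset.sum_congr rfl fun x _ => ?_
  by_cases hq : μ.Tm y = 0
  · rw [JointDist.p_eq_zero_of_Tm hq x, JointDist.Vc, if_pos hq]
    simp
  · have hW : μ.Vc y x = μ.p x y / μ.Tm y := by rw [JointDist.Vc, if_neg hq]
    have hQW : μ.Tm y * μ.Vc y x = μ.p x y := by
      rw [hW, mul_div_cancel₀ _ hq]
    rw [hQW]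
    by_cases hp : μ.p x y = 0
    · rw [if_pos hp, hp, zero_mul]
    · rw [if_neg hp, hW, div_div]

/- EReal helpers. -/

lemma relEnt_ne_bot {Z : Type} [Fintype Z] (p q : Z → ℝ) : relEnt p q ≠ ⊥ := by
  rw [relEnt]; split
  · exact EReal.coe_ne_bot _
  · simp

lemma condRelEnt_ne_bot {A B : Type} [Fintype A] [Fintype B]
    (q : A → ℝ) (w w' : A → B → ℝ) : condRelEnt q w w' ≠ ⊥ := by
  rw [condRelEnt]; split
  · exact EReal.coe_ne_bot _
  · simp

lemma tmul_ne_bot (t : ℝ) (ht : 0 ≤ t) {x : EReal} (hx : x ≠ ⊥) :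
    (t : EReal) * x ≠ ⊥ := by
  rcases eq_or_lt_of_le ht with h | h
  · rw [← h]; simp
  · induction x with
    | bot => exact absurd rfl hx
    | coe r => rw [← EReal.coe_mul]; exact EReal.coe_ne_bot _
    | top => rw [EReal.mul_top_of_pos (by exact_mod_cast h)]; simp

lemma ereal_add_ne_bot {x y : EReal} (hx : x ≠ ⊥) (hy : y ≠ ⊥) : x + y ≠ ⊥ := by
  intro h
  rcases EReal.add_eq_bot_iff.mp h with h' | h'
  · exact hx h'
  · exact hy h'

lemma ereal_lt_top_left {x y : EReal} (h : x + y < ⊤) (hy : y ≠ ⊥) : x < ⊤ := by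
  by_contra hc
  push_neg at hc
  rw [top_le_iff] at hc
  rw [hc, EReal.top_add_of_ne_bot hy] at h
  exact absurd h (lt_irrefl _)

lemma ereal_lt_top_right {x y : EReal} (h : x + y < ⊤) (hx : x ≠ ⊥) : y < ⊤ := by
  by_contra hc
  push_neg at hc
  rw [top_le_iff] at hc
  rw [hc, EReal.add_top_of_ne_bot hx] at h
  exact absurd h (lt_irrefl _)

lemma relEnt_ac_of_lt_top {Z : Type} [Fintype Z] {p q : Z → ℝ}
    (h : relEnt p q < ⊤) : ∀ z, q z = 0 → p z = 0 := by
  rw [relEnt] at h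
  split at h
  · assumption
  · exact absurd h (lt_irrefl _)

lemma condRelEnt_ac_of_lt_top {A B : Type} [Fintype A] [Fintype B]
    {q : A → ℝ} {w w' : A → B → ℝ}
    (h : condRelEnt q w w' < ⊤) : ∀ a b, q a ≠ 0 → w' a b = 0 → w a b = 0 := by
  rw [condRelEnt] at h
  split at h
  · assumption
  · exact absurd h (lt_irrefl _)

lemma lt_top_of_tmul {t : ℝ} (ht : 0 < t) {x : EReal}
    (h : (t : EReal) * x < ⊤) : x < ⊤ := by
  by_contra hc
  push_neg at hc
  rw [top_le_iff] at hc
  rw [hc, EReal.mul_top_of_pos (by exact_mod_cast ht)] at h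
  exact absurd h (lt_irrefl _)

end Aux2

/-- The set `S = { QW : E_Q[f] ≤ α, F₁^t(QW, Q̃W̃) < ⊤ }` is convex and
`QW ↦ F₁^t(QW, Q̃W̃)` is convex on it. -/
theorem stmt5 {X Y : Type} [Fintype X] [Fintype Y]
    (P : X → Y → ℝ) (hP : ∀ x y, 0 ≤ P x y) (hPsum : ∀ x, ∑ y : Y, P x y = 1)
    (t : Fin 4 → ℝ) (ht : ∀ i, 0 ≤ t i)
    (f : X → ℝ) (α : ℝ) (ν : JointDist X Y)
    (μ₁ μ₂ : JointDist X Y)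
    (h₁ : expCost f μ₁ ≤ α ∧ F1 P t μ₁ ν < ⊤)
    (h₂ : expCost f μ₂ ≤ α ∧ F1 P t μ₂ ν < ⊤)
    (l : ℝ) (hl0 : 0 ≤ l) (hl1 : l ≤ 1)
    (κ : JointDist X Y)
    (hκ : ∀ x y, κ.p x y = l * μ₁.p x y + (1 - l) * μ₂.p x y) :
    (expCost f κ ≤ α ∧ F1 P t κ ν < ⊤) ∧
      F1 P t κ ν ≤ (l : EReal) * F1 P t μ₁ ν
        + ((1 - l : ℝ) : EReal) * F1 P t μ₂ ν := by
  have hl' : (0:ℝ) ≤ 1 - l := by linarith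
  have hκQ : ∀ x, κ.Qm x = l * μ₁.Qm x + (1 - l) * μ₂.Qm x := by
    intro x
    simp only [JointDist.Qm, hκ, Finset.sum_add_distrib, Finset.mul_sum]
  have hκT : ∀ y, κ.Tm y = l * μ₁.Tm y + (1 - l) * μ₂.Tm y := by
    intro y
    simp only [JointDist.Tm, hκ, Finset.sum_add_distrib, Finset.mul_sum]
  have hexp : expCost f κ ≤ α := by
    have e : expCost f κ = l * expCost f μ₁ + (1 - l) * expCost f μ₂ := by
      rw [expCost, expCost, expCost, Finset.mul_sum, Finset.mul_sum,
        ← Finset.sum_add_distrib]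
      refine Finset.sum_congr rfl fun x _ => ?_
      rw [hκQ x]; ring
    rw [e]
    have b1 := mul_le_mul_of_nonneg_left h₁.1 hl0
    have b2 := mul_le_mul_of_nonneg_left h₂.1 hl'
    linarith
  -- absolute continuity facts from finiteness
  have peel : ∀ μ : JointDist X Y, F1 P t μ ν < ⊤ →
      (∀ x y, μ.Qm x * P x y = 0 → μ.p x y = 0) ∧
      (t 0 ≠ 0 → ∀ z, ν.Qm z = 0 → μ.Qm z = 0) ∧
      (t 1 ≠ 0 → ∀ x y, μ.Qm x * ν.Wc x y = 0 → μ.p x y = 0) ∧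
      (t 2 ≠ 0 → ∀ z, ν.Tm z = 0 → μ.Tm z = 0) ∧
      (t 3 ≠ 0 → ∀ y x, μ.Tm y * ν.Vc y x = 0 → μ.p x y = 0) := by
    intro μ hF
    rw [F1, Dt, condDivP] at hF
    have n0 : condRelEnt μ.Qm μ.Wc P ≠ ⊥ := condRelEnt_ne_bot _ _ _
    have n1 : (t 0 : EReal) * relEnt μ.Qm ν.Qm ≠ ⊥ :=
      tmul_ne_bot _ (ht 0) (relEnt_ne_bot _ _)
    have n2 : (t 1 : EReal) * condRelEnt μ.Qm μ.Wc ν.Wc ≠ ⊥ :=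
      tmul_ne_bot _ (ht 1) (condRelEnt_ne_bot _ _ _)
    have n3 : (t 2 : EReal) * relEnt μ.Tm ν.Tm ≠ ⊥ :=
      tmul_ne_bot _ (ht 2) (relEnt_ne_bot _ _)
    have n4 : (t 3 : EReal) * condRelEnt μ.Tm μ.Vc ν.Vc ≠ ⊥ :=
      tmul_ne_bot _ (ht 3) (condRelEnt_ne_bot _ _ _)
    have f0 : condRelEnt μ.Qm μ.Wc P < ⊤ :=
      ereal_lt_top_left hF
        (ereal_add_ne_bot (ereal_add_ne_bot (ereal_add_ne_bot n1 n2) n3) n4)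
    have fR : (t 0 : EReal) * relEnt μ.Qm ν.Qm
        + (t 1 : EReal) * condRelEnt μ.Qm μ.Wc ν.Wc
        + (t 2 : EReal) * relEnt μ.Tm ν.Tm
        + (t 3 : EReal) * condRelEnt μ.Tm μ.Vc ν.Vc < ⊤ :=
      ereal_lt_top_right hF n0
    have f4 := ereal_lt_top_right fR (ereal_add_ne_bot (ereal_add_ne_bot n1 n2) n3)
    have fR2 := ereal_lt_top_left fR n4
    have f3 := ereal_lt_top_right fR2 (ereal_add_ne_bot n1 n2)
    have fR3 := ereal_lt_top_left fR2 n3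
    have f1 := ereal_lt_top_left fR3 n2
    have f2 := ereal_lt_top_right fR3 n1
    refine ⟨wc_cform μ P (condRelEnt_ac_of_lt_top f0), ?_, ?_, ?_, ?_⟩
    · intro h0
      exact relEnt_ac_of_lt_top
        (lt_top_of_tmul (lt_of_le_of_ne (ht 0) (Ne.symm h0)) f1)
    · intro h0
      exact wc_cform μ ν.Wc (condRelEnt_ac_of_lt_top
        (lt_top_of_tmul (lt_of_le_of_ne (ht 1) (Ne.symm h0)) f2))
    · intro h0
      exact relEnt_ac_of_lt_top
        (lt_top_of_tmul (lt_of_le_of_ne (ht 2) (Ne.symm h0)) f3)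
    · intro h0
      exact vc_cform μ ν.Vc (condRelEnt_ac_of_lt_top
        (lt_top_of_tmul (lt_of_le_of_ne (ht 3) (Ne.symm h0)) f4))
  obtain ⟨A1, B1, C1, D1, E1⟩ := peel μ₁ h₁.2
  obtain ⟨A2, B2, C2, D2, E2⟩ := peel μ₂ h₂.2
  -- Block 0 : condDivP
  have hacκ0 : ∀ x y, κ.Qm x * P x y = 0 → κ.p x y = 0 := by
    intro x y h
    rcases mul_eq_zero.mp h with h0 | h0
    · exact JointDist.p_eq_zero_of_Qm h0 y
    · have e1 := A1 x y (by rw [h0, mul_zero])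
      have e2 := A2 x y (by rw [h0, mul_zero])
      rw [hκ, e1, e2]; ring
  have ineq0 : (∑ x : X, ∑ y : Y, κ.p x y * Real.log (κ.p x y / (κ.Qm x * P x y)))
      ≤ l * (∑ x : X, ∑ y : Y, μ₁.p x y * Real.log (μ₁.p x y / (μ₁.Qm x * P x y)))
        + (1 - l) * (∑ x : X, ∑ y : Y, μ₂.p x y * Real.log (μ₂.p x y / (μ₂.Qm x * P x y))) :=
    sum_logsum2 l hl0 hl1 μ₁.p μ₂.p (fun x y => μ₁.Qm x * P x y)
      (fun x y => μ₂.Qm x * P x y) κ.p (fun x y => κ.Qm x * P x y)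
      μ₁.nonneg μ₂.nonneg
      (fun x y => mul_nonneg (μ₁.Qm_nonneg x) (hP x y))
      (fun x y => mul_nonneg (μ₂.Qm_nonneg x) (hP x y))
      A1 A2 hκ (fun x y => by simp only [hκQ]; ring)
  -- Block 1 : t 0 * relEnt Qm
  have Bl1 : ∃ k b c : ℝ,
      (t 0 : EReal) * relEnt κ.Qm ν.Qm = ((k:ℝ) : EReal) ∧
      (t 0 : EReal) * relEnt μ₁.Qm ν.Qm = ((b:ℝ) : EReal) ∧
      (t 0 : EReal) * relEnt μ₂.Qm ν.Qm = ((c:ℝ) : EReal) ∧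
      k ≤ l * b + (1 - l) * c := by
    by_cases h0 : t 0 = 0
    · exact ⟨0, 0, 0, by rw [h0]; simp, by rw [h0]; simp, by rw [h0]; simp, by norm_num⟩
    · have a1 := B1 h0
      have a2 := B2 h0
      have aκ : ∀ z, ν.Qm z = 0 → κ.Qm z = 0 := fun z hz => by
        rw [hκQ z, a1 z hz, a2 z hz]; ring
      have base : (∑ z : X, κ.Qm z * Real.log (κ.Qm z / ν.Qm z))
          ≤ l * (∑ z : X, μ₁.Qm z * Real.log (μ₁.Qm z / ν.Qm z))
            + (1 - l) * (∑ z : X, μ₂.Qm z * Real.log (μ₂.Qm z / ν.Qm z)) :=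
        sum_logsum1 l hl0 hl1 μ₁.Qm μ₂.Qm ν.Qm ν.Qm κ.Qm ν.Qm
          μ₁.Qm_nonneg μ₂.Qm_nonneg ν.Qm_nonneg ν.Qm_nonneg a1 a2 hκQ
          (fun z => by ring)
      refine ⟨t 0 * _, t 0 * _, t 0 * _,
        by rw [relEnt_eq _ _ aκ, ← EReal.coe_mul],
        by rw [relEnt_eq _ _ a1, ← EReal.coe_mul],
        by rw [relEnt_eq _ _ a2, ← EReal.coe_mul], ?_⟩
      have := mul_le_mul_of_nonneg_left base (ht 0)
      nlinarith [this]
  -- Block 2 : t 1 * condRelEnt Qm Wc ν.Wc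
  have Bl2 : ∃ k b c : ℝ,
      (t 1 : EReal) * condRelEnt κ.Qm κ.Wc ν.Wc = ((k:ℝ) : EReal) ∧
      (t 1 : EReal) * condRelEnt μ₁.Qm μ₁.Wc ν.Wc = ((b:ℝ) : EReal) ∧
      (t 1 : EReal) * condRelEnt μ₂.Qm μ₂.Wc ν.Wc = ((c:ℝ) : EReal) ∧
      k ≤ l * b + (1 - l) * c := by
    by_cases h0 : t 1 = 0
    · exact ⟨0, 0, 0, by rw [h0]; simp, by rw [h0]; simp, by rw [h0]; simp, by norm_num⟩
    · have a1 := C1 h0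
      have a2 := C2 h0
      have aκ : ∀ x y, κ.Qm x * ν.Wc x y = 0 → κ.p x y = 0 := by
        intro x y h
        rcases mul_eq_zero.mp h with hq | hq
        · exact JointDist.p_eq_zero_of_Qm hq y
        · have e1 := a1 x y (by rw [hq, mul_zero])
          have e2 := a2 x y (by rw [hq, mul_zero])
          rw [hκ, e1, e2]; ring
      have base : (∑ x : X, ∑ y : Y, κ.p x y * Real.log (κ.p x y / (κ.Qm x * ν.Wc x y)))
          ≤ l * (∑ x : X, ∑ y : Y, μ₁.p x y * Real.log (μ₁.p x y / (μ₁.Qm x * ν.Wc x y)))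
            + (1 - l) * (∑ x : X, ∑ y : Y, μ₂.p x y * Real.log (μ₂.p x y / (μ₂.Qm x * ν.Wc x y))) :=
        sum_logsum2 l hl0 hl1 μ₁.p μ₂.p (fun x y => μ₁.Qm x * ν.Wc x y)
          (fun x y => μ₂.Qm x * ν.Wc x y) κ.p (fun x y => κ.Qm x * ν.Wc x y)
          μ₁.nonneg μ₂.nonneg
          (fun x y => mul_nonneg (μ₁.Qm_nonneg x) (ν.Wc_nonneg x y))
          (fun x y => mul_nonneg (μ₂.Qm_nonneg x) (ν.Wc_nonneg x y))
          a1 a2 hκ (fun x y => by simp only [hκQ]; ring)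
      refine ⟨t 1 * _, t 1 * _, t 1 * _,
        by rw [condRelEnt_Wc_eq _ _ aκ, ← EReal.coe_mul],
        by rw [condRelEnt_Wc_eq _ _ a1, ← EReal.coe_mul],
        by rw [condRelEnt_Wc_eq _ _ a2, ← EReal.coe_mul], ?_⟩
      have := mul_le_mul_of_nonneg_left base (ht 1)
      nlinarith [this]
  -- Block 3 : t 2 * relEnt Tm
  have Bl3 : ∃ k b c : ℝ,
      (t 2 : EReal) * relEnt κ.Tm ν.Tm = ((k:ℝ) : EReal) ∧
      (t 2 : EReal) * relEnt μ₁.Tm ν.Tm = ((b:ℝ) : EReal) ∧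
      (t 2 : EReal) * relEnt μ₂.Tm ν.Tm = ((c:ℝ) : EReal) ∧
      k ≤ l * b + (1 - l) * c := by
    by_cases h0 : t 2 = 0
    · exact ⟨0, 0, 0, by rw [h0]; simp, by rw [h0]; simp, by rw [h0]; simp, by norm_num⟩
    · have a1 := D1 h0
      have a2 := D2 h0
      have aκ : ∀ z, ν.Tm z = 0 → κ.Tm z = 0 := fun z hz => by
        rw [hκT z, a1 z hz, a2 z hz]; ring
      have base : (∑ z : Y, κ.Tm z * Real.log (κ.Tm z / ν.Tm z))
          ≤ l * (∑ z : Y, μ₁.Tm z * Real.log (μ₁.Tm z / ν.Tm z))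
            + (1 - l) * (∑ z : Y, μ₂.Tm z * Real.log (μ₂.Tm z / ν.Tm z)) :=
        sum_logsum1 l hl0 hl1 μ₁.Tm μ₂.Tm ν.Tm ν.Tm κ.Tm ν.Tm
          μ₁.Tm_nonneg μ₂.Tm_nonneg ν.Tm_nonneg ν.Tm_nonneg a1 a2 hκT
          (fun z => by ring)
      refine ⟨t 2 * _, t 2 * _, t 2 * _,
        by rw [relEnt_eq _ _ aκ, ← EReal.coe_mul],
        by rw [relEnt_eq _ _ a1, ← EReal.coe_mul],
        by rw [relEnt_eq _ _ a2, ← EReal.coe_mul], ?_⟩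
      have := mul_le_mul_of_nonneg_left base (ht 2)
      nlinarith [this]
  -- Block 4 : t 3 * condRelEnt Tm Vc ν.Vc
  have Bl4 : ∃ k b c : ℝ,
      (t 3 : EReal) * condRelEnt κ.Tm κ.Vc ν.Vc = ((k:ℝ) : EReal) ∧
      (t 3 : EReal) * condRelEnt μ₁.Tm μ₁.Vc ν.Vc = ((b:ℝ) : EReal) ∧
      (t 3 : EReal) * condRelEnt μ₂.Tm μ₂.Vc ν.Vc = ((c:ℝ) : EReal) ∧
      k ≤ l * b + (1 - l) * c := by
    by_cases h0 : t 3 = 0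
    · exact ⟨0, 0, 0, by rw [h0]; simp, by rw [h0]; simp, by rw [h0]; simp, by norm_num⟩
    · have a1 := E1 h0
      have a2 := E2 h0
      have aκ : ∀ y x, κ.Tm y * ν.Vc y x = 0 → κ.p x y = 0 := by
        intro y x h
        rcases mul_eq_zero.mp h with hq | hq
        · exact JointDist.p_eq_zero_of_Tm hq x
        · have e1 := a1 y x (by rw [hq, mul_zero])
          have e2 := a2 y x (by rw [hq, mul_zero])
          rw [hκ, e1, e2]; ring
      have base : (∑ y : Y, ∑ x : X, κ.p x y * Real.log (κ.p x y / (κ.Tm y * ν.Vc y x)))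
          ≤ l * (∑ y : Y, ∑ x : X, μ₁.p x y * Real.log (μ₁.p x y / (μ₁.Tm y * ν.Vc y x)))
            + (1 - l) * (∑ y : Y, ∑ x : X, μ₂.p x y * Real.log (μ₂.p x y / (μ₂.Tm y * ν.Vc y x))) :=
        sum_logsum2 l hl0 hl1 (fun y x => μ₁.p x y) (fun y x => μ₂.p x y)
          (fun y x => μ₁.Tm y * ν.Vc y x) (fun y x => μ₂.Tm y * ν.Vc y x)
          (fun y x => κ.p x y) (fun y x => κ.Tm y * ν.Vc y x)
          (fun y x => μ₁.nonneg x y) (fun y x => μ₂.nonneg x y)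
          (fun y x => mul_nonneg (μ₁.Tm_nonneg y) (ν.Vc_nonneg y x))
          (fun y x => mul_nonneg (μ₂.Tm_nonneg y) (ν.Vc_nonneg y x))
          a1 a2 (fun y x => hκ x y) (fun y x => by simp only [hκT]; ring)
      refine ⟨t 3 * _, t 3 * _, t 3 * _,
        by rw [condRelEnt_Vc_eq _ _ aκ, ← EReal.coe_mul],
        by rw [condRelEnt_Vc_eq _ _ a1, ← EReal.coe_mul],
        by rw [condRelEnt_Vc_eq _ _ a2, ← EReal.coe_mul], ?_⟩
      have := mul_le_mul_of_nonneg_left base (ht 3)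
      nlinarith [this]
  obtain ⟨k1, b1, c1, ek1, eb1, ec1, i1⟩ := Bl1
  obtain ⟨k2, b2, c2, ek2, eb2, ec2, i2⟩ := Bl2
  obtain ⟨k3, b3, c3, ek3, eb3, ec3, i3⟩ := Bl3
  obtain ⟨k4, b4, c4, ek4, eb4, ec4, i4⟩ := Bl4
  -- evaluate F1 for κ, μ₁, μ₂
  have eκ : F1 P t κ ν
      = (((∑ x : X, ∑ y : Y, κ.p x y * Real.log (κ.p x y / (κ.Qm x * P x y)))
          + (((k1 + k2) + k3) + k4) : ℝ) : EReal) := by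
    rw [F1, Dt, condDivP, condRelEnt_Wc_eq _ _ hacκ0, ek1, ek2, ek3, ek4]
    norm_cast
  have e₁ : F1 P t μ₁ ν
      = (((∑ x : X, ∑ y : Y, μ₁.p x y * Real.log (μ₁.p x y / (μ₁.Qm x * P x y)))
          + (((b1 + b2) + b3) + b4) : ℝ) : EReal) := by
    rw [F1, Dt, condDivP, condRelEnt_Wc_eq _ _ A1, eb1, eb2, eb3, eb4]
    norm_cast
  have e₂ : F1 P t μ₂ ν
      = (((∑ x : X, ∑ y : Y, μ₂.p x y * Real.log (μ₂.p x y / (μ₂.Qm x * P x y)))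
          + (((c1 + c2) + c3) + c4) : ℝ) : EReal) := by
    rw [F1, Dt, condDivP, condRelEnt_Wc_eq _ _ A2, ec1, ec2, ec3, ec4]
    norm_cast
  refine ⟨⟨hexp, ?_⟩, ?_⟩
  · rw [eκ]; exact EReal.coe_lt_top _
  · rw [eκ, e₁, e₂, ← EReal.coe_mul, ← EReal.coe_mul, ← EReal.coe_add,
      EReal.coe_le_coe_iff]
    linarith
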